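/- Let Y_n be the branch of height n of the ternary tree (d = 3) with root r, origin leaf o, and collapsed boundary vertex b. If all rotors in Y_n initially point in direction 1, then the first 2^n − 1 chips started at r alternate destinations: the first stops at b, the second at o, the third at b, and so on (odd-numbered chips stop at b, even-numbered at o). After these 2^n − 1 walks, all rotors again point in direction 1. -/

import Mathlib

/-!
The finite regular tree with chips stopped at the leaves.

Fix `d ≥ 3` and a height `n ≥ 1`.  The tree `T̂ₙ` is the finite rooted tree in
which every non-leaf vertex has `d - 1` children and every leaf is at distance
`n - 1` from the root, together with one extra leaf `o` attached to the root.
We encode its tree vertices as lists over `Fin (d - 1)` of length `≤ n - 1`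
(the root is `[]`, children are obtained by appending a letter), and a chip
position is `Option (List (Fin (d - 1)))`, where `none` is the extra leaf `o`.

Every non-leaf (internal) vertex carries a rotor with `d` directions indexed
by `ZMod d`; the value `v` with `v < d - 1` points to the child obtained by
appending `v`, and the value `d - 1` points to the parent (for the root, to
`o`).  A rotor-router step first increments the rotor at the chip's location
(cyclically), then moves the chip in the new direction.  Chips are stopped
upon reaching a leaf (`o` included): leaf positions are absorbing.  Note that
these dynamics coincide with those of the wired tree `T̄ₙ` (all leaves
collapsed to a single sink) and of the branch `Yₙ` (all leaves except `o`
collapsed to a single boundary vertex `b`): stopping at `b` means stopping at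
a tree vertex of depth `n - 1`.
-/

/-- Rotor configurations (values at non-internal lists are irrelevant). -/
abbrev BConf (d : ℕ) := List (Fin (d - 1)) → ZMod d

/-- One rotor-router step on `T̂ₙ`; positions at the leaves are absorbing. -/
def bstep (d n : ℕ) (p : BConf d × Option (List (Fin (d - 1)))) :
    BConf d × Option (List (Fin (d - 1))) :=
  match p with
  | (C, none) => (C, none)
  | (C, some w) =>
    if n ≤ w.length + 1 then (C, some w)
    else
      let r := C w + 1
      let C' := Function.update C w r
      if h : r.val < d - 1 then (C', some (w ++ [⟨r.val, h⟩]))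
      else (C', if w = [] then none else some w.dropLast)

/-- Whether a position is a stopping position (the leaf `o` or a leaf of the
tree, i.e. a vertex of depth `n - 1`). -/
def bstoppedB (d n : ℕ) (p : Option (List (Fin (d - 1)))) : Bool :=
  match p with
  | none => true
  | some w => decide (n ≤ w.length + 1)

/-- Start one chip at the root `[]` and run rotor-router steps until the chip
reaches a leaf; return the resulting rotor configuration together with the
position at which the chip stopped. -/
noncomputable def runChip (d n : ℕ) (C : BConf d) :
    BConf d × Option (List (Fin (d - 1))) :=
  haveI := Classical.dec (∃ k, bstoppedB d n ((bstep d n)^[k] (C, some [])).2 = true)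
  if h : ∃ k, bstoppedB d n ((bstep d n)^[k] (C, some [])).2 = true then
    (bstep d n)^[Nat.find h] (C, some [])
  else (C, some [])

/-- The rotor configuration after `j` chips, started in succession at the
root, have walked until reaching a leaf (rotors persist between chips). -/
noncomputable def confAfter (d n : ℕ) (C : BConf d) : ℕ → BConf d
  | 0 => C
  | j + 1 => (runChip d n (confAfter d n C j)).1

/-- The position at which the `(j+1)`-st chip stops (`j = 0, 1, 2, …`):
`none` means it stopped at `o`, `some w` that it stopped at the leaf `w`. -/
noncomputable def result (d n : ℕ) (C : BConf d) (j : ℕ) :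
    Option (List (Fin (d - 1))) :=
  (runChip d n (confAfter d n C j)).2

-- vertices
abbrev V := List (Fin 2)

def upPos (u : V) : Option V := if u = [] then none else some u.dropLast

/-- reach within the subtree below `u`, all intermediate positions internal -/
def reachS (n : ℕ) (u : V) (C : BConf 3) (v : V) (D : BConf 3) (p : Option V) : Prop :=
  ∃ t, (bstep 3 n)^[t] (C, some v) = (D, p) ∧
    ∀ s < t, ∃ w : V, u <+: w ∧ w.length + 1 < n ∧
      ((bstep 3 n)^[s] (C, some v)).2 = some w

lemma bstep_internal (n : ℕ) (C : BConf 3) (u : V) (h : u.length + 1 < n) :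
    bstep 3 n (C, some u) = (Function.update C u (C u + 1),
      if h2 : (C u + 1).val < 2 then some (u ++ [⟨(C u + 1).val, h2⟩])
      else upPos u) := by
  show (if n ≤ u.length + 1 then _ else _) = _
  rw [if_neg (by omega)]
  split <;> rfl

lemma bstep_rot0 (n : ℕ) (C : BConf 3) (u : V) (h : u.length + 1 < n) (hC : C u = 0) :
    bstep 3 n (C, some u) = (Function.update C u 1, some (u ++ [1])) := by
  rw [bstep_internal n C u h, hC]
  rw [show (0:ZMod 3) + 1 = 1 by decide]
  rw [dif_pos (show (1:ZMod 3).val < 2 by decide)]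
  rfl

lemma bstep_rot1 (n : ℕ) (C : BConf 3) (u : V) (h : u.length + 1 < n) (hC : C u = 1) :
    bstep 3 n (C, some u) = (Function.update C u 2, upPos u) := by
  rw [bstep_internal n C u h, hC]
  rw [show (1:ZMod 3) + 1 = 2 by decide]
  rw [dif_neg (show ¬ (2:ZMod 3).val < 2 by decide)]

lemma bstep_rot2 (n : ℕ) (C : BConf 3) (u : V) (h : u.length + 1 < n) (hC : C u = 2) :
    bstep 3 n (C, some u) = (Function.update C u 0, some (u ++ [0])) := by
  rw [bstep_internal n C u h, hC]
  rw [show (2:ZMod 3) + 1 = 0 by decide]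
  rw [dif_pos (show (0:ZMod 3).val < 2 by decide)]
  rfl

lemma bstep_update (n : ℕ) (C C' : BConf 3) (w0 : V) (h : w0.length + 1 < n)
    (hw : C' w0 = C w0) :
    (bstep 3 n (C', some w0)).1 = Function.update C' w0 ((bstep 3 n (C, some w0)).1 w0) ∧
    (bstep 3 n (C', some w0)).2 = (bstep 3 n (C, some w0)).2 := by
  rw [bstep_internal n C w0 h, bstep_internal n C' w0 h, hw]
  constructor
  · simp [Function.update_self]
  · simp

/-- transport along a trajectory staying inside the subtree of `u` -/
lemma transport_aux (n : ℕ) (u : V) : ∀ (t : ℕ) (C C' : BConf 3) (q : Option V)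
    (D : BConf 3) (p : Option V),
    (bstep 3 n)^[t] (C, q) = (D, p) →
    (∀ s < t, ∃ w : V, u <+: w ∧ w.length + 1 < n ∧ ((bstep 3 n)^[s] (C, q)).2 = some w) →
    (∀ w, u <+: w → C' w = C w) →
    (bstep 3 n)^[t] (C', q) = ((fun w => if u <+: w then D w else C' w), p) ∧
    (∀ w, ¬ u <+: w → D w = C w) ∧
    (∀ s < t, ((bstep 3 n)^[s] (C', q)).2 = ((bstep 3 n)^[s] (C, q)).2) := by
  intro t
  induction t with
  | zero =>
    intro C C' q D p h0 _ hC
    simp only [Function.iterate_zero, id_eq] at h0 ⊢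
    obtain ⟨rfl, rfl⟩ : C = D ∧ q = p := by
      exact ⟨congrArg Prod.fst h0, congrArg Prod.snd h0⟩
    refine ⟨?_, fun w hw => rfl, fun s hs => absurd hs (by omega)⟩
    ext w
    · by_cases hw : u <+: w <;> simp [hw, hC w]
    · rfl
  | succ t ih =>
    intro C C' q D p h0 hmid hC
    obtain ⟨w0, hw0u, hw0n, hq⟩ := hmid 0 (Nat.succ_pos t)
    simp only [Function.iterate_zero, id_eq] at hq
    subst hq
    have hstep := bstep_update n C C' w0 hw0n (hC w0 hw0u)
    set y := bstep 3 n (C, some w0) with hy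
    set y' := bstep 3 n (C', some w0) with hy'
    have hCup : ∀ w, u <+: w → y'.1 w = y.1 w := by
      intro w hw
      rw [hstep.1]
      rcases eq_or_ne w w0 with rfl | hne
      · simp
      · rw [Function.update_of_ne hne, hC w hw]
        rw [hy, bstep_internal n C w0 hw0n]
        simp [Function.update_of_ne hne]
    have hiter : ∀ (Z : BConf 3 × Option V) (s : ℕ),
        (bstep 3 n)^[s+1] (Z.1, some w0) = (bstep 3 n)^[s] (bstep 3 n (Z.1, some w0)) := by
      intro Z s; rw [Function.iterate_succ_apply]
    have h0' : (bstep 3 n)^[t] (y.1, y.2) = (D, p) := by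
      rw [← h0, Function.iterate_succ_apply, ← hy]
    have hmid' : ∀ s < t, ∃ w : V, u <+: w ∧ w.length + 1 < n ∧
        ((bstep 3 n)^[s] (y.1, y.2)).2 = some w := by
      intro s hs
      obtain ⟨w, h1, h2, h3⟩ := hmid (s+1) (by omega)
      exact ⟨w, h1, h2, by rw [← h3, Function.iterate_succ_apply, ← hy]⟩
    obtain ⟨ih1, ih2, ih3⟩ := ih y.1 y'.1 y.2 D p h0' hmid' hCup
    have hy2 : y'.2 = y.2 := hstep.2
    refine ⟨?_, ?_, ?_⟩
    · rw [Function.iterate_succ_apply, ← hy', (Prod.ext rfl hy2 : y' = (y'.1, y.2)), ih1]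
      congr 1
      ext w
      by_cases hw : u <+: w
      · simp [hw]
      · simp only [hw, if_neg hw]
        rw [hy', bstep_internal n C' w0 hw0n]
        have : w ≠ w0 := fun h => hw (h ▸ hw0u)
        simp [Function.update_of_ne this]
    · intro w hw
      rw [ih2 w hw, hy, bstep_internal n C w0 hw0n]
      have : w ≠ w0 := fun h => hw (h ▸ hw0u)
      simp [Function.update_of_ne this]
    · intro s hs
      cases s with
      | zero => simp
      | succ s =>
        rw [Function.iterate_succ_apply, Function.iterate_succ_apply, ← hy, ← hy',
          (Prod.ext rfl hy2 : y' = (y'.1, y.2))]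
        exact ih3 s (by omega)

lemma reachS_refl (n : ℕ) (u : V) (C : BConf 3) (v : V) : reachS n u C v C (some v) :=
  ⟨0, rfl, fun s hs => absurd hs (by omega)⟩

lemma reachS_head {n : ℕ} {u v v' : V} {C C' D : BConf 3} {p : Option V}
    (h1 : u <+: v) (h2 : v.length + 1 < n)
    (hstep : bstep 3 n (C, some v) = (C', some v'))
    (h : reachS n u C' v' D p) : reachS n u C v D p := by
  obtain ⟨t, ht, hmid⟩ := h
  refine ⟨t + 1, ?_, ?_⟩
  · rw [Function.iterate_succ_apply, hstep, ht]
  · intro s hs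
    cases s with
    | zero => exact ⟨v, h1, h2, rfl⟩
    | succ s =>
      obtain ⟨w, a1, a2, a3⟩ := hmid s (by omega)
      exact ⟨w, a1, a2, by rw [Function.iterate_succ_apply, hstep]; exact a3⟩

lemma reachS_trans {n : ℕ} {u v x : V} {C D E : BConf 3} {p : Option V}
    (_h1 : u <+: x) (_h2 : x.length + 1 < n)
    (ha : reachS n u C v D (some x)) (hb : reachS n u D x E p) :
    reachS n u C v E p := by
  obtain ⟨t1, ht1, hm1⟩ := ha
  obtain ⟨t2, ht2, hm2⟩ := hb
  refine ⟨t2 + t1, ?_, ?_⟩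
  · rw [Function.iterate_add_apply, ht1, ht2]
  · intro s hs
    rcases Nat.lt_or_ge s t1 with h | h
    · exact hm1 s h
    · obtain ⟨s2, rfl⟩ : ∃ s2, s = s2 + t1 := ⟨s - t1, by omega⟩
      obtain ⟨w, a1, a2, a3⟩ := hm2 s2 (by omega)
      exact ⟨w, a1, a2, by rw [Function.iterate_add_apply, ht1]; exact a3⟩

lemma reachS_weaken {n : ℕ} {u u' v : V} {C D : BConf 3} {p : Option V}
    (h : u <+: u') (hr : reachS n u' C v D p) : reachS n u C v D p := by
  obtain ⟨t, ht, hm⟩ := hr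
  exact ⟨t, ht, fun s hs => by
    obtain ⟨w, a1, a2, a3⟩ := hm s hs; exact ⟨w, h.trans a1, a2, a3⟩⟩

lemma reachS_transport {n : ℕ} {u v : V} {C C' D : BConf 3} {p : Option V}
    (h : reachS n u C v D p) (hC : ∀ w, u <+: w → C' w = C w) :
    reachS n u C' v (fun w => if u <+: w then D w else C' w) p := by
  obtain ⟨t, ht, hm⟩ := h
  obtain ⟨h1, _, h3⟩ := transport_aux n u t C C' (some v) D p ht hm hC
  exact ⟨t, h1, fun s hs => by
    obtain ⟨w, a1, a2, a3⟩ := hm s hs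
    exact ⟨w, a1, a2, by rw [h3 s hs]; exact a3⟩⟩

lemma reachS_offSubtree {n : ℕ} {u v : V} {C D : BConf 3} {p : Option V}
    (h : reachS n u C v D p) : ∀ w, ¬ u <+: w → D w = C w := by
  obtain ⟨t, ht, hm⟩ := h
  exact (transport_aux n u t C C (some v) D p ht hm (fun _ _ => rfl)).2.1

lemma reachS_single {n : ℕ} {u v : V} {C D : BConf 3} {p : Option V}
    (h1 : u <+: v) (h2 : v.length + 1 < n)
    (hstep : bstep 3 n (C, some v) = (D, p)) : reachS n u C v D p :=
  ⟨1, by rw [Function.iterate_one]; exact hstep,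
    fun s hs => by
      obtain rfl : s = 0 := by omega
      exact ⟨v, h1, h2, rfl⟩⟩

lemma ne_of_prefix_append {u w : V} {a : Fin 2} (h : u ++ [a] <+: w) : w ≠ u := by
  intro hwu
  have hl := h.length_le
  rw [hwu] at hl
  simp at hl

lemma prefix_append_ne {u w : V} {a b : Fin 2} (hab : a ≠ b) (h : u ++ [a] <+: w) :
    ¬ (u ++ [b] <+: w) := by
  intro h'
  rcases List.prefix_or_prefix_of_prefix h h' with hp | hp <;>
  · have := hp.eq_of_length (by simp)
    have := List.append_cancel_left this
    simp at this
    exact hab (by simp [this])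

lemma not_append_prefix_self (u : V) (a : Fin 2) : ¬ (u ++ [a] <+: u) := by
  intro h
  have := h.length_le
  simp at this

def Gconf (u : V) (C : BConf 3) (DR DL : ℕ → BConf 3) (ρ : ZMod 3) (R L : ℕ) : BConf 3 :=
  fun w => if w = u then ρ else if u ++ [1] <+: w then DR R w
    else if u ++ [0] <+: w then DL L w else C w

lemma Gconf_u (u : V) (C : BConf 3) (DR DL : ℕ → BConf 3) (ρ : ZMod 3) (R L : ℕ) :
    Gconf u C DR DL ρ R L u = ρ := by simp [Gconf]

lemma Gconf_right {u w : V} (C : BConf 3) (DR DL : ℕ → BConf 3) (ρ : ZMod 3) (R L : ℕ)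
    (h : u ++ [1] <+: w) : Gconf u C DR DL ρ R L w = DR R w := by
  rw [Gconf, if_neg (ne_of_prefix_append h), if_pos h]

lemma Gconf_left {u w : V} (C : BConf 3) (DR DL : ℕ → BConf 3) (ρ : ZMod 3) (R L : ℕ)
    (h : u ++ [0] <+: w) : Gconf u C DR DL ρ R L w = DL L w := by
  rw [Gconf, if_neg (ne_of_prefix_append h),
    if_neg (prefix_append_ne (by decide) h), if_pos h]

lemma Gconf_update (u : V) (C : BConf 3) (DR DL : ℕ → BConf 3) (ρ ρ' : ZMod 3) (R L : ℕ) :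
    Function.update (Gconf u C DR DL ρ R L) u ρ' = Gconf u C DR DL ρ' R L := by
  funext w
  rcases eq_or_ne w u with rfl | hne
  · simp [Gconf]
  · rw [Function.update_of_ne hne, Gconf, Gconf, if_neg hne, if_neg hne]

lemma Gconf_patchR (u : V) (C : BConf 3) (DR DL : ℕ → BConf 3) (ρ : ZMod 3) (R R' L : ℕ) :
    (fun w => if u ++ [1] <+: w then DR R' w else Gconf u C DR DL ρ R L w)
      = Gconf u C DR DL ρ R' L := by
  funext w
  by_cases h : u ++ [1] <+: w
  · rw [if_pos h, Gconf_right _ _ _ _ _ _ h]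
  · by_cases hw : w = u <;> simp [Gconf, hw, h, not_append_prefix_self]

lemma Gconf_patchL (u : V) (C : BConf 3) (DR DL : ℕ → BConf 3) (ρ : ZMod 3) (R L L' : ℕ) :
    (fun w => if u ++ [0] <+: w then DL L' w else Gconf u C DR DL ρ R L w)
      = Gconf u C DR DL ρ R L' := by
  funext w
  by_cases h : u ++ [0] <+: w
  · rw [if_pos h, Gconf_left _ _ _ _ _ _ h]
  · rw [if_neg h, Gconf, Gconf]
    by_cases h1 : u ++ [1] <+: w <;> simp [h, h1]

lemma Gconf_eq_C (u : V) (C : BConf 3) (DR DL : ℕ → BConf 3) (ρ : ZMod 3) (R L : ℕ)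
    (hR : DR R = C) (hL : DL L = C) (hu : C u = ρ) : Gconf u C DR DL ρ R L = C := by
  funext w
  rw [Gconf]
  rcases eq_or_ne w u with rfl | hne
  · simp [hu]
  · rw [if_neg hne, hR, hL]
    split <;> [rfl; (split <;> rfl)]

def schedRho : ℕ → ZMod 3 := fun k =>
  if k = 0 then 0 else
  if (k-1) % 4 = 0 then 1 else if (k-1) % 4 = 1 then 2 else if (k-1) % 4 = 2 then 0 else 2

def schedR : ℕ → ℕ := fun k =>
  if k = 0 then 0 else if (k-1) % 4 ≤ 2 then 1 + 2*((k-1)/4) else 2 + 2*((k-1)/4)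

def schedL : ℕ → ℕ := fun k =>
  if k = 0 then 0 else if (k-1) % 4 ≤ 1 then 2*((k-1)/4) else 1 + 2*((k-1)/4)

lemma sched_eval1 (q : ℕ) :
    schedRho (4*q+1) = 1 ∧ schedR (4*q+1) = 1+2*q ∧ schedL (4*q+1) = 2*q := by
  have h1 : 4*q+1 ≠ 0 := by omega
  have h2 : (4*q+1-1) % 4 = 0 := by omega
  have h3 : (4*q+1-1) / 4 = q := by omega
  refine ⟨?_, ?_, ?_⟩ <;> simp [schedRho, schedR, schedL, h1, h2, h3]

lemma sched_eval2 (q : ℕ) :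
    schedRho (4*q+2) = 2 ∧ schedR (4*q+2) = 1+2*q ∧ schedL (4*q+2) = 2*q := by
  have h1 : 4*q+2 ≠ 0 := by omega
  have h2 : (4*q+1) % 4 = 1 := by omega
  have h3 : (4*q+1) / 4 = q := by omega
  refine ⟨?_, ?_, ?_⟩ <;> simp [schedRho, schedR, schedL, h1, h2, h3]

lemma sched_eval3 (q : ℕ) :
    schedRho (4*q+3) = 0 ∧ schedR (4*q+3) = 1+2*q ∧ schedL (4*q+3) = 1+2*q := by
  have h1 : 4*q+3 ≠ 0 := by omega
  have h2 : (4*q+2) % 4 = 2 := by omega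
  have h3 : (4*q+2) / 4 = q := by omega
  refine ⟨?_, ?_, ?_⟩ <;> simp [schedRho, schedR, schedL, h1, h2, h3]

lemma sched_eval4 (q : ℕ) :
    schedRho (4*q+4) = 2 ∧ schedR (4*q+4) = 2+2*q ∧ schedL (4*q+4) = 1+2*q := by
  have h1 : 4*q+4 ≠ 0 := by omega
  have h2 : (4*q+3) % 4 = 3 := by omega
  have h3 : (4*q+3) / 4 = q := by omega
  refine ⟨?_, ?_, ?_⟩ <;> simp [schedRho, schedR, schedL, h1, h2, h3]

lemma sched_eval0 : schedRho 0 = 0 ∧ schedR 0 = 0 ∧ schedL 0 = 0 := by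
  refine ⟨?_, ?_, ?_⟩ <;> simp [schedRho, schedR, schedL]

lemma excursions (n : ℕ) : ∀ m, 1 ≤ m → ∀ u : V, u.length + m = n → ∀ C : BConf 3,
    (∀ w, u <+: w → C w = 0) →
    ∃ D : ℕ → BConf 3, D 0 = C ∧ D (2 ^ m - 1) = C ∧
      ∀ j < 2 ^ m - 1,
        (Even j → ∃ w : V, w.length + 1 = n ∧ reachS n u (D j) u (D (j+1)) (some w)) ∧
        (Odd j → reachS n u (D j) u (D (j+1)) (upPos u)) := by
  intro m hm
  induction m, hm using Nat.le_induction with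
  | base =>
    intro u hu C hC
    refine ⟨fun _ => C, rfl, rfl, ?_⟩
    intro j hj
    obtain rfl : j = 0 := by omega
    constructor
    · exact fun _ => ⟨u, by omega, reachS_refl n u C u⟩
    · intro ho
      rw [Nat.odd_iff] at ho; omega
  | succ m hm ih =>
    intro u hu C hC
    have hun : u.length + 1 < n := by omega
    obtain ⟨DR, hDR0, hDRM, hDRex⟩ := ih (u ++ [1]) (by simp; omega) C
      (fun w hw => hC w ((List.prefix_append u [1]).trans hw))
    obtain ⟨DL, hDL0, hDLM, hDLex⟩ := ih (u ++ [0]) (by simp; omega) C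
      (fun w hw => hC w ((List.prefix_append u [0]).trans hw))
    have hp1 : 2^(m+1) = 2^m * 2 := pow_succ 2 m
    have hFpos : 0 < 2^m := Nat.pow_pos (by norm_num)
    have hF2 : 2 ≤ 2^m := by
      calc 2 = 2^1 := rfl
      _ ≤ 2^m := Nat.pow_le_pow_right (by norm_num) hm
    have hpm : 2^m = 2^(m-1)*2 := by rw [← pow_succ]; congr 1; omega
    have hFpos' : 0 < 2^(m-1) := Nat.pow_pos (by norm_num)
    set G := Gconf u C DR DL with hG
    -- single root steps
    have hstep0 : ∀ R L, bstep 3 n (G 0 R L, some u) = (G 1 R L, some (u ++ [1])) := by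
      intro R L
      rw [bstep_rot0 n _ u hun (Gconf_u u C DR DL 0 R L), hG, Gconf_update]
    have hstep1 : ∀ R L, bstep 3 n (G 1 R L, some u) = (G 2 R L, upPos u) := by
      intro R L
      rw [bstep_rot1 n _ u hun (Gconf_u u C DR DL 1 R L), hG, Gconf_update]
    have hstep2 : ∀ R L, bstep 3 n (G 2 R L, some u) = (G 0 R L, some (u ++ [0])) := by
      intro R L
      rw [bstep_rot2 n _ u hun (Gconf_u u C DR DL 2 R L), hG, Gconf_update]
    -- transported child excursions
    have htransR : ∀ (ρ : ZMod 3) (L i : ℕ) (p : Option V),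
        reachS n (u++[1]) (DR i) (u++[1]) (DR (i+1)) p →
        reachS n u (G ρ i L) (u++[1]) (G ρ (i+1) L) p := by
      intro ρ L i p h
      have h2 := reachS_transport h (C' := G ρ i L)
        (fun w hw => Gconf_right C DR DL ρ i L hw)
      rw [hG] at h2
      rw [Gconf_patchR] at h2
      exact reachS_weaken (List.prefix_append u [1]) h2
    have htransL : ∀ (ρ : ZMod 3) (R i : ℕ) (p : Option V),
        reachS n (u++[0]) (DL i) (u++[0]) (DL (i+1)) p →
        reachS n u (G ρ R i) (u++[0]) (G ρ R (i+1)) p := by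
      intro ρ R i p h
      have h2 := reachS_transport h (C' := G ρ R i)
        (fun w hw => Gconf_left C DR DL ρ R i hw)
      rw [hG] at h2
      rw [Gconf_patchL] at h2
      exact reachS_weaken (List.prefix_append u [0]) h2
    have hupc : upPos (u ++ [1]) = some u := by simp [upPos]
    have hupc0 : upPos (u ++ [0]) = some u := by simp [upPos]
    refine ⟨fun k => G (schedRho k) (schedR k) (schedL k), ?_, ?_, ?_⟩
    · -- D 0 = C
      simp only []
      obtain ⟨e1, e2, e3⟩ := sched_eval0
      rw [e1, e2, e3, hG]
      exact Gconf_eq_C u C DR DL 0 0 0 hDR0 hDL0 (hC u List.prefix_rfl)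
    · -- D (2^(m+1)-1) = C
      simp only []
      have hidx : 2^(m+1) - 1 = 4*(2^(m-1)-1)+3 := by
        have : 2^m = 2^(m-1) * 2 := by
          conv_lhs => rw [show m = (m-1)+1 by omega]
          exact pow_succ 2 (m-1)
        omega
      rw [hidx]
      obtain ⟨e1, e2, e3⟩ := sched_eval3 (2^(m-1)-1)
      rw [e1, e2, e3, hG]
      have hieq : 1+2*(2^(m-1)-1) = 2^m - 1 := by
        have : 2^m = 2^(m-1) * 2 := by
          conv_lhs => rw [show m = (m-1)+1 by omega]
          exact pow_succ 2 (m-1)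
        have : 1 ≤ 2^(m-1) := Nat.pow_pos (by norm_num)
        omega
      rw [hieq]
      exact Gconf_eq_C u C DR DL 0 _ _ hDRM hDLM (hC u List.prefix_rfl)
    · -- the excursions
      intro j hj
      simp only []
      have hjF : j < 2^m * 2 - 1 := by omega
      rcases Nat.eq_zero_or_pos j with rfl | hj0
      · -- j = 0 : fate L via right child insertion 0
        constructor
        · intro _
          obtain ⟨w, hw, hreach⟩ := (hDRex 0 (by omega)).1 Even.zero
          refine ⟨w, hw, ?_⟩
          obtain ⟨e1, e2, e3⟩ := sched_eval0
          have e4 := sched_eval1 0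
          norm_num at e4
          rw [e1, e2, e3, e4.1, e4.2.1, e4.2.2]
          exact reachS_head List.prefix_rfl hun (hstep0 0 0) (htransR 1 0 0 _ hreach)
        · intro ho
          rw [Nat.odd_iff] at ho; omega
      · obtain ⟨q, hq⟩ : ∃ q, j = 4*q+1 ∨ j = 4*q+2 ∨ j = 4*q+3 ∨ j = 4*q+4 :=
          ⟨(j-1)/4, by omega⟩
        rcases hq with rfl | rfl | rfl | rfl
        · -- j = 4q+1 : fate U, single root step
          constructor
          · intro he; rw [Nat.even_iff] at he; omega
          · intro _
            obtain ⟨e1, e2, e3⟩ := sched_eval1 q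
            have e4 := sched_eval2 q
            rw [show 4*q+1+1 = 4*q+2 by omega, e1, e2, e3, e4.1, e4.2.1, e4.2.2]
            exact reachS_single List.prefix_rfl hun (hstep1 (1+2*q) (2*q))
        · -- j = 4q+2 : fate L via left child insertion 2q
          constructor
          · intro _
            obtain ⟨w, hw, hreach⟩ := (hDLex (2*q) (by omega)).1 (Nat.even_iff.mpr (by omega))
            refine ⟨w, hw, ?_⟩
            obtain ⟨e1, e2, e3⟩ := sched_eval2 q
            have e4 := sched_eval3 q
            rw [show 4*q+2+1 = 4*q+3 by omega, e1, e2, e3, e4.1, e4.2.1, e4.2.2]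
            have hcore := htransL 0 (1+2*q) (2*q) _ hreach
            rw [show 2*q+1 = 1+2*q by omega] at hcore
            exact reachS_head List.prefix_rfl hun (hstep2 (1+2*q) (2*q)) hcore
          · intro ho; rw [Nat.odd_iff] at ho; omega
        · -- j = 4q+3 : fate U via right child insertion 1+2q then up
          constructor
          · intro he; rw [Nat.even_iff] at he; omega
          · intro _
            have hreach := (hDRex (1+2*q) (by omega)).2 (Nat.odd_iff.mpr (by omega))
            rw [hupc] at hreach
            obtain ⟨e1, e2, e3⟩ := sched_eval3 q
            have e4 := sched_eval4 q
            rw [show 4*q+3+1 = 4*q+4 by omega, e1, e2, e3, e4.1, e4.2.1, e4.2.2]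
            have hcore := htransR 1 (1+2*q) (1+2*q) _ hreach
            rw [show 1+2*q+1 = 2+2*q by omega] at hcore
            exact reachS_head List.prefix_rfl hun (hstep0 (1+2*q) (1+2*q))
              (reachS_trans List.prefix_rfl hun hcore
                (reachS_single List.prefix_rfl hun (hstep1 (2+2*q) (1+2*q))))
        · -- j = 4q+4 : fate L via left U-return then right child insertion 2+2q
          constructor
          · intro _
            have hreachL := (hDLex (1+2*q) (by omega)).2 (Nat.odd_iff.mpr (by omega))
            rw [hupc0] at hreachL
            obtain ⟨w, hw, hreachR⟩ :=
              (hDRex (2+2*q) (by omega)).1 (Nat.even_iff.mpr (by omega))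
            refine ⟨w, hw, ?_⟩
            obtain ⟨e1, e2, e3⟩ := sched_eval4 q
            have e4 := sched_eval1 (q+1)
            rw [show 4*q+4+1 = 4*(q+1)+1 by omega, e1, e2, e3, e4.1, e4.2.1, e4.2.2,
              show 1+2*(q+1) = 2+2*q+1 by omega, show 2*(q+1) = 1+2*q+1 by omega]
            exact reachS_head List.prefix_rfl hun (hstep2 (2+2*q) (1+2*q))
              (reachS_trans List.prefix_rfl hun (htransL 0 (2+2*q) (1+2*q) _ hreachL)
                (reachS_head List.prefix_rfl hun (hstep0 (2+2*q) (1+2*q+1))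
                  (htransR 1 (1+2*q+1) (2+2*q) _ hreachR)))
          · intro ho; rw [Nat.odd_iff] at ho; omega

lemma runChip_eq {n : ℕ} {C D : BConf 3} {p : Option V}
    (h : reachS n [] C [] D p) (hp : bstoppedB 3 n p = true) :
    runChip 3 n C = (D, p) := by
  obtain ⟨t, ht, hm⟩ := h
  have hex : ∃ k, bstoppedB 3 n ((bstep 3 n)^[k] (C, some [])).2 = true :=
    ⟨t, by rw [ht]; exact hp⟩
  unfold runChip
  rw [dif_pos hex]
  have hft : Nat.find hex = t := by
    rw [Nat.find_eq_iff]
    refine ⟨by rw [ht]; exact hp, ?_⟩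
    intro s hs
    obtain ⟨w, _, hwn, hpos⟩ := hm s hs
    simp only [bstoppedB, hpos]
    simp
    omega
  rw [hft, ht]


/-- On the branch `Yₙ` of the ternary tree (`d = 3`), if all rotors initially
point in direction 1 (to the left child, encoded by `0 : ZMod 3`), then the
first `2ⁿ − 1` chips started at the root alternate destinations: chips
`1, 3, 5, …` (even `j` in 0-indexing) stop at the boundary `b` (i.e. at a leaf
of depth `n − 1`), and chips `2, 4, 6, …` (odd `j`) stop at `o`.  After these
`2ⁿ − 1` walks, all rotors again point in direction 1. -/
theorem stmt10 (n : ℕ) :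
    (∀ j < 2 ^ n - 1,
      (Even j → ∃ w : List (Fin 2), w.length + 1 = n ∧
        result 3 n (fun _ => 0) j = some w) ∧
      (Odd j → result 3 n (fun _ => 0) j = none)) ∧
    ∀ w : List (Fin 2), w.length + 1 < n →
      confAfter 3 n (fun _ => 0) (2 ^ n - 1) w = 0 := by

  rcases Nat.eq_zero_or_pos n with rfl | hn
  · constructor
    · intro j hj
      exact absurd hj (by norm_num)
    · intro w hw
      exact absurd hw (by omega)
  · obtain ⟨D, hD0, hDK, hDex⟩ := excursions n n hn [] (by simp)
      (fun _ => 0) (fun _ _ => rfl)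
    have hup : upPos ([] : V) = none := by simp [upPos]
    have hrun : ∀ j < 2^n - 1, runChip 3 n (D j) = (D (j+1), (runChip 3 n (D j)).2) ∧
        ((Even j → ∃ w : V, w.length + 1 = n ∧ (runChip 3 n (D j)).2 = some w) ∧
         (Odd j → (runChip 3 n (D j)).2 = none)) := by
      intro j hj
      obtain ⟨hEv, hOd⟩ := hDex j hj
      rcases Nat.even_or_odd j with he | ho
      · obtain ⟨w, hw, hreach⟩ := hEv he
        have hr := runChip_eq hreach (by simp [bstoppedB]; omega)
        rw [hr]
        refine ⟨rfl, fun _ => ⟨w, hw, rfl⟩, fun ho => ?_⟩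
        rw [Nat.even_iff] at he; rw [Nat.odd_iff] at ho; omega
      · have hreach := hOd ho
        rw [hup] at hreach
        have hr := runChip_eq hreach rfl
        rw [hr]
        refine ⟨rfl, fun he => ?_, fun _ => rfl⟩
        rw [Nat.even_iff] at he; rw [Nat.odd_iff] at ho; omega
    have key : ∀ j ≤ 2^n - 1, confAfter 3 n (fun _ => 0) j = D j := by
      intro j
      induction j with
      | zero => exact fun _ => hD0.symm
      | succ j ihj =>
        intro hj
        have hj' : j < 2^n - 1 := by omega
        show (runChip 3 n (confAfter 3 n (fun _ => 0) j)).1 = D (j+1)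
        rw [ihj (by omega), (hrun j hj').1]
    constructor
    · intro j hj
      have hres : result 3 n (fun _ => 0) j = (runChip 3 n (D j)).2 := by
        show (runChip 3 n (confAfter 3 n (fun _ => 0) j)).2 = _
        rw [key j hj.le]
      rw [hres]
      exact (hrun j hj).2
    · intro w hw
      rw [key _ le_rfl, hDK]
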